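/- arXiv:1506.05645 — 2 statements merged into one kernel-verified Lean document; each statement's English description precedes it below -/
import Mathlib

section
/- Let $k$ be a field of characteristic $p$, $A = \frac{1}{f_A}\tilde{A}$ with $f_A \in k[x]$ nonzero and $\tilde{A} \in M_r(k[x])$, and $d = \max(\deg f_A, \deg \tilde{A})$. Define $A_1 = -A$ and $A_{i+1} = A_i' - A A_i$. Then the entries of the matrix $f_A^p \cdot A_p$ are polynomials of degree at most $dp$. -/
open Polynomial

/-- The standard derivation `d/dx` on the field of rational functions `k(x)`. -/
noncomputable def RatFunc.deriv {k : Type*} [Field k] (f : RatFunc k) : RatFunc k :=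
  algebraMap (Polynomial k) (RatFunc k)
      (derivative f.num * f.denom - f.num * derivative f.denom) /
    algebraMap (Polynomial k) (RatFunc k) (f.denom ^ 2)

lemma RatFunc.deriv_div {k : Type*} [Field k] (a b : Polynomial k) (hb : b ≠ 0) :
    RatFunc.deriv (algebraMap (Polynomial k) (RatFunc k) a /
        algebraMap (Polynomial k) (RatFunc k) b) =
      algebraMap (Polynomial k) (RatFunc k) (derivative a * b - a * derivative b) /
        algebraMap (Polynomial k) (RatFunc k) (b ^ 2) := by
  set φ := algebraMap (Polynomial k) (RatFunc k) with hφdef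
  have hinj : Function.Injective φ := RatFunc.algebraMap_injective k
  set f : RatFunc k := φ a / φ b with hf
  have hD : f.denom ≠ 0 := f.denom_ne_zero
  have hbφ : φ b ≠ 0 := fun h => hb (hinj (by simpa using h))
  have hDφ : φ f.denom ≠ 0 := fun h => hD (hinj (by simpa using h))
  -- cross multiplication identity
  have hcross : a * f.denom = f.num * b := by
    apply hinj
    have h0 : φ a / φ b = φ f.num / φ f.denom := by
      rw [f.num_div_denom]
    rw [div_eq_div_iff hbφ hDφ] at h0
    rw [map_mul, map_mul]
    linear_combination h0
  have hcross' : derivative a * f.denom + a * derivative f.denom =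
      derivative f.num * b + f.num * derivative b := by
    have := congrArg derivative hcross
    simpa [derivative_mul] using this
  show φ (derivative f.num * f.denom - f.num * derivative f.denom) / φ (f.denom ^ 2)
      = φ (derivative a * b - a * derivative b) / φ (b ^ 2)
  rw [div_eq_div_iff (by simpa using pow_ne_zero 2 hDφ) (by simpa using pow_ne_zero 2 hbφ),
    ← map_mul, ← map_mul]
  congr 1
  linear_combination (derivative f.denom * b + derivative b * f.denom) * hcross -
    (b * f.denom) * hcross'

/-- let `A = (1/f_A)·Ã` with `f_A ∈ k[x]` nonzero and `Ã` a matrix of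
polynomials, and `d` bounding `deg f_A` and the degrees of the entries of `Ã`.
With `A₁ = -A`, `A_{i+1} = A_i' - A·A_i`, the entries of `f_A^p · A_p` are
polynomials of degree at most `d·p`. -/
theorem pCurvature_degree_bound {p : ℕ} (hp : p.Prime) {k : Type*} [Field k] [CharP k p]
    {r : ℕ} (fA : Polynomial k) (hfA : fA ≠ 0) (At : Matrix (Fin r) (Fin r) (Polynomial k))
    (d : ℕ) (hd : fA.natDegree ≤ d) (hAt : ∀ i j, (At i j).natDegree ≤ d)
    (A : Matrix (Fin r) (Fin r) (RatFunc k))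
    (hA : ∀ i j, A i j = algebraMap (Polynomial k) (RatFunc k) (At i j) /
        algebraMap (Polynomial k) (RatFunc k) fA)
    (Aseq : ℕ → Matrix (Fin r) (Fin r) (RatFunc k))
    (h1 : Aseq 1 = -A)
    (hrec : ∀ i, 1 ≤ i → Aseq (i + 1) = (Aseq i).map RatFunc.deriv - A * Aseq i) :
    ∀ i j, ∃ P : Polynomial k, P.natDegree ≤ d * p ∧
      algebraMap (Polynomial k) (RatFunc k) (fA ^ p) * Aseq p i j =
        algebraMap (Polynomial k) (RatFunc k) P := by
  set φ := algebraMap (Polynomial k) (RatFunc k) with hφdef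
  have hinj : Function.Injective φ := RatFunc.algebraMap_injective k
  have hfAφ : φ fA ≠ 0 := fun h => hfA (hinj (by simpa using h))
  have key : ∀ n, 1 ≤ n → ∀ i j, ∃ P : Polynomial k, P.natDegree ≤ d * n ∧
      φ (fA ^ n) * Aseq n i j = φ P := by
    intro n hn
    induction n, hn using Nat.le_induction with
    | base =>
      intro i j
      refine ⟨-(At i j), by simpa using hAt i j, ?_⟩
      rw [h1, Matrix.neg_apply, hA i j, pow_one, map_neg]
      rw [mul_neg, neg_inj, mul_div_cancel₀ _ hfAφ]
    | succ n hn IH =>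
      have IH' := IH
      intro i j
      choose P hPd hP using IH'
      obtain ⟨m, rfl⟩ := Nat.exists_eq_succ_of_ne_zero (by omega : n ≠ 0)
      set c : Polynomial k := C ((m + 1 : ℕ) : k) with hc
      -- the entry formula
      have hrw : Aseq (m + 1 + 1) i j =
          RatFunc.deriv (Aseq (m + 1) i j) - ∑ l, A i l * Aseq (m + 1) l j := by
        rw [hrec (m + 1) hn]
        simp [Matrix.sub_apply, Matrix.map_apply, Matrix.mul_apply]
      have hpow : φ (fA ^ (m + 1)) ≠ 0 := by
        simpa using pow_ne_zero (m + 1) hfAφ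
      have hentry : ∀ l j', Aseq (m + 1) l j' = φ (P l j') / φ (fA ^ (m + 1)) := by
        intro l j'
        rw [eq_div_iff hpow, mul_comm, hP]
      -- the derivative part
      set Q1 : Polynomial k :=
        derivative (P i j) * fA - c * P i j * derivative fA with hQ1
      have hderiv : φ (fA ^ (m + 1 + 1)) * RatFunc.deriv (Aseq (m + 1) i j) = φ Q1 := by
        rw [hentry i j, RatFunc.deriv_div _ _ (pow_ne_zero _ hfA)]
        rw [derivative_pow]
        rw [← mul_div_assoc, div_eq_iff (by rw [map_pow]; exact pow_ne_zero 2 hpow),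
          ← map_mul, ← map_mul]
        congr 1
        simp only [hQ1, Nat.add_sub_cancel, ← hc]
        ring
      -- the product part
      set Q2 : Polynomial k := ∑ l, At i l * P l j with hQ2
      have hprod : φ (fA ^ (m + 1 + 1)) * ∑ l, A i l * Aseq (m + 1) l j = φ Q2 := by
        rw [hQ2, map_sum, Finset.mul_sum]
        apply Finset.sum_congr rfl
        intro l _
        rw [hA i l, hentry l j, map_mul, pow_succ, map_mul]
        field_simp
      refine ⟨Q1 - Q2, ?_, ?_⟩
      · have hPij : (P i j).natDegree ≤ d * (m + 1) := hPd i j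
        have hder : (derivative (P i j)).natDegree ≤ d * (m + 1) :=
          (natDegree_derivative_le _).trans ((Nat.sub_le _ _).trans hPij)
        have hderf : (derivative fA).natDegree ≤ d :=
          (natDegree_derivative_le _).trans ((Nat.sub_le _ _).trans hd)
        have h1d : (derivative (P i j) * fA).natDegree ≤ d * (m + 1) + d :=
          natDegree_mul_le.trans (Nat.add_le_add hder hd)
        have h2d : (c * P i j * derivative fA).natDegree ≤ d * (m + 1) + d := by
          refine natDegree_mul_le.trans (Nat.add_le_add ?_ hderf)
          refine natDegree_mul_le.trans ?_
          have hc0 : c.natDegree = 0 := natDegree_C _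
          rw [hc0, Nat.zero_add]
          exact hPij
        have hQ1d : Q1.natDegree ≤ d * (m + 1) + d :=
          (natDegree_sub_le _ _).trans (max_le h1d h2d)
        have hQ2d : Q2.natDegree ≤ d * (m + 1) + d := by
          refine natDegree_sum_le_of_forall_le _ _ fun l _ => natDegree_mul_le.trans ?_
          exact (Nat.add_le_add (hAt i l) (hPd l j)).trans
            (le_of_eq (by simp only [Nat.succ_eq_add_one]; ring))
        exact (natDegree_sub_le _ _).trans ((max_le hQ1d hQ2d).trans
          (le_of_eq (by simp only [Nat.succ_eq_add_one]; ring)))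
      · rw [hrw, mul_sub, hderiv, hprod, ← map_sub]
  intro i j
  exact key p hp.one_lt.le i j
end

section
/- Let $k$ be a field of characteristic $p$, $\ell = k[x]/S$ with $S \in k[x]$ separable, and $a \in \ell$ the class of $x$. The ring homomorphism $\varphi_S : k[x] \to \ell[t]/t^p$, $f(x) \mapsto f(t + a) \bmod t^p$, is surjective with kernel the ideal generated by $S^p$; hence it induces a ring isomorphism $k[x]/S^p \xrightarrow{\sim} \ell[t]/t^p$. Moreover $\varphi_S$ commutes with derivations, where $k[x]$ carries $d/dx$ and $\ell[t]/t^p$ the derivation $d/dt$ (with elements of $\ell$ regarded as constants). -/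
open Polynomial

theorem comp_eval_aux17 {k : Type*} [CommRing k] (S γ : Polynomial k) :
    (S.map (C : k →+* Polynomial k)).eval γ = S.comp γ := by
  rw [eval_map]; rfl

theorem newton_aux17 {k : Type*} [CommRing k] (S : Polynomial k) (hS : S.Separable) (n : ℕ) :
    ∃ β : Polynomial k, S ∣ (β - X) ∧ S ^ (n + 1) ∣ S.comp β := by
  induction n with
  | zero => exact ⟨X, by simp, by simpa using dvd_refl S⟩
  | succ n ih =>
    obtain ⟨β, hβ1, hβ2⟩ := ih
    obtain ⟨u, v, huv⟩ := hS
    obtain ⟨c, hc⟩ := (S.map (C : k →+* Polynomial k)).binomExpansion β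
      (-(S.comp β * v.comp β))
    rw [comp_eval_aux17, comp_eval_aux17, derivative_map, comp_eval_aux17] at hc
    have hSdvd : S ∣ S.comp β := (dvd_pow_self S n.succ_ne_zero).trans hβ2
    have h2 : u.comp β * S.comp β + v.comp β * (derivative S).comp β = 1 := by
      have := congrArg (fun q : Polynomial k => q.comp β) huv
      simpa [add_comp, mul_comp, one_comp] using this
    have key : S.comp (β + -(S.comp β * v.comp β)) =
        (S.comp β) ^ 2 * (u.comp β + c * (v.comp β) ^ 2) := by
      rw [hc]; linear_combination (-(S.comp β)) * h2
    refine ⟨β + -(S.comp β * v.comp β), ?_, ?_⟩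
    · have : β + -(S.comp β * v.comp β) - X = (β - X) + -(S.comp β * v.comp β) := by ring
      rw [this]
      exact dvd_add hβ1 (dvd_neg.mpr (hSdvd.mul_right _))
    · rw [key]
      refine Dvd.dvd.mul_right ?_ _
      calc S ^ (n + 1 + 1) ∣ S ^ ((n + 1) * 2) := pow_dvd_pow S (by omega)
        _ = (S ^ (n + 1)) ^ 2 := by rw [pow_mul]
        _ ∣ (S.comp β) ^ 2 := pow_dvd_pow_of_dvd hβ2 2

set_option maxHeartbeats 2000000 in
/-- let `k` be a field of characteristic `p`, `S ∈ k[x]` separable,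
`ℓ = k[x]/S`, `a ∈ ℓ` the class of `x`, and `φ_S : k[x] → ℓ[t]/t^p`,
`f(x) ↦ f(t+a) mod t^p`.  Then `φ_S` is surjective with kernel `(S^p)`, hence
induces a ring isomorphism `k[x]/S^p ≃ ℓ[t]/t^p`; moreover `φ_S` commutes with the
derivations (`d/dx` on `k[x]`, and the one induced by `d/dt` on `ℓ[t]/t^p`). -/
theorem phiS_surjective_ker_and_deriv {p : ℕ} (hp : p.Prime) {k : Type*} [Field k]
    [CharP k p] (S : Polynomial k) (hS : S.Separable) :
    letI ℓ := Polynomial k ⧸ Ideal.span {S}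
    letI : CommRing ℓ := Ideal.Quotient.commRing _
    letI a : ℓ := Ideal.Quotient.mk (Ideal.span {S}) X
    letI φ₀ : Polynomial k →+* Polynomial ℓ :=
      (aeval (X + C a : Polynomial ℓ) : Polynomial k →ₐ[k] Polynomial ℓ).toRingHom
    letI J : Ideal (Polynomial ℓ) := Ideal.span {(X : Polynomial ℓ) ^ p}
    letI Φ : Polynomial k →+* (Polynomial ℓ ⧸ J) := (Ideal.Quotient.mk J).comp φ₀
    Function.Surjective Φ ∧
      RingHom.ker Φ = Ideal.span {S ^ p} ∧
      (∃ e : (Polynomial k ⧸ Ideal.span {S ^ p}) ≃+* (Polynomial ℓ ⧸ J),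
        ∀ f : Polynomial k, e (Ideal.Quotient.mk _ f) = Φ f) ∧
      (∀ f : Polynomial k, Φ (derivative f) = Ideal.Quotient.mk J (derivative (φ₀ f))) := by
  classical
  set I : Ideal (Polynomial k) := Ideal.span {S} with hIdef
  letI : CommRing (Polynomial k ⧸ I) := Ideal.Quotient.commRing _
  set Ip : Ideal (Polynomial k) := Ideal.span {S ^ p} with hIpdef
  set a : Polynomial k ⧸ I := Ideal.Quotient.mk I X with hadef
  set φ₀ : Polynomial k →+* Polynomial (Polynomial k ⧸ I) :=
    (aeval (X + C a : Polynomial (Polynomial k ⧸ I)) :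
      Polynomial k →ₐ[k] Polynomial (Polynomial k ⧸ I)).toRingHom with hφ₀def
  set J : Ideal (Polynomial (Polynomial k ⧸ I)) :=
    Ideal.span {(X : Polynomial (Polynomial k ⧸ I)) ^ p} with hJdef
  letI : CommRing (Polynomial (Polynomial k ⧸ I) ⧸ J) := Ideal.Quotient.commRing _
  set Φ : Polynomial k →+* (Polynomial (Polynomial k ⧸ I) ⧸ J) :=
    (Ideal.Quotient.mk J).comp φ₀ with hΦdef
  -- basic facts
  have F1 : ∀ c : k, algebraMap k (Polynomial k ⧸ I) c = Ideal.Quotient.mk I (C c) := by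
    intro c
    rw [← Ideal.Quotient.mk_algebraMap, Polynomial.algebraMap_eq]
  have hevalI : ∀ f : Polynomial k,
      eval₂ (algebraMap k (Polynomial k ⧸ I)) a f = Ideal.Quotient.mk I f := by
    intro f
    have h1 : algebraMap k (Polynomial k ⧸ I) = (Ideal.Quotient.mk I).comp C :=
      RingHom.ext F1
    rw [h1, hadef, ← hom_eval₂, eval₂_C_X]
  have F2C : ∀ c : k, φ₀ (C c) = C (algebraMap k (Polynomial k ⧸ I) c) := by
    intro c
    show aeval (X + C a) (C c) = _
    rw [aeval_C, Polynomial.algebraMap_apply]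
  have F2X : φ₀ X = X + C a := by
    show aeval (X + C a) X = _
    rw [aeval_X]
  have F3 : ∀ f : Polynomial k,
      φ₀ f = (f.map (algebraMap k (Polynomial k ⧸ I))).comp (X + C a) := by
    intro f
    show eval₂ (algebraMap k (Polynomial (Polynomial k ⧸ I))) (X + C a) f =
      eval₂ C (X + C a) (f.map (algebraMap k (Polynomial k ⧸ I)))
    rw [eval₂_map]
    congr 1
  have hmkIS : Ideal.Quotient.mk I S = 0 :=
    Ideal.Quotient.eq_zero_iff_mem.mpr (Ideal.subset_span rfl)
  have hφ₀S_dvd : (X : Polynomial (Polynomial k ⧸ I)) ∣ φ₀ S := by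
    rw [X_dvd_iff, coeff_zero_eq_eval_zero, F3, eval_comp]
    have h0 : (X + C a : Polynomial (Polynomial k ⧸ I)).eval 0 = a := by simp
    rw [h0, eval_map, hevalI]
    exact hmkIS
  have hΦ : ∀ f : Polynomial k, Φ f = Ideal.Quotient.mk J (φ₀ f) := fun f => rfl
  have hmkJXp : Ideal.Quotient.mk J ((X : Polynomial (Polynomial k ⧸ I)) ^ p) = 0 :=
    Ideal.Quotient.eq_zero_iff_mem.mpr (Ideal.subset_span rfl)
  have hΦSp : Φ (S ^ p) = 0 := by
    obtain ⟨q, hq⟩ := hφ₀S_dvd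
    have h1 : φ₀ (S ^ p) = X ^ p * q ^ p := by rw [map_pow, hq, mul_pow]
    rw [hΦ, h1, map_mul, hmkJXp, zero_mul]
  have hkerSp : ∀ f ∈ Ip, Φ f = 0 := by
    intro f hf
    obtain ⟨g, rfl⟩ := Ideal.mem_span_singleton.mp hf
    rw [map_mul, hΦSp, zero_mul]
  -- the induced map on the quotient
  set Φb : (Polynomial k ⧸ Ip) →+* (Polynomial (Polynomial k ⧸ I) ⧸ J) :=
    Ideal.Quotient.lift Ip Φ hkerSp with hΦbdef
  have hΦb : ∀ f : Polynomial k, Φb (Ideal.Quotient.mk Ip f) = Φ f := fun f =>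
    Ideal.Quotient.lift_mk _ _ _
  -- Newton approximation
  obtain ⟨β, hβ1, hβ2⟩ := newton_aux17 S hS (p - 1)
  have hp1 : p - 1 + 1 = p := by have := hp.pos; omega
  rw [hp1] at hβ2
  -- the inverse map
  set Lk : Polynomial k →+* (Polynomial k ⧸ Ip) :=
    (Ideal.Quotient.mk Ip).comp (eval₂RingHom (C : k →+* Polynomial k) β) with hLkdef
  have hLk : ∀ g : Polynomial k, Lk g = Ideal.Quotient.mk Ip (g.comp β) := fun g => rfl
  have hmkpSβ : Ideal.Quotient.mk Ip (S.comp β) = 0 :=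
    Ideal.Quotient.eq_zero_iff_mem.mpr (Ideal.mem_span_singleton.mpr hβ2)
  have hLkI : ∀ g ∈ I, Lk g = 0 := by
    intro g hg
    obtain ⟨h, rfl⟩ := Ideal.mem_span_singleton.mp hg
    rw [hLk, mul_comp, map_mul, hmkpSβ, zero_mul]
  set L : (Polynomial k ⧸ I) →+* (Polynomial k ⧸ Ip) :=
    Ideal.Quotient.lift I Lk hLkI with hLdef
  have hL : ∀ g : Polynomial k, L (Ideal.Quotient.mk I g) = Ideal.Quotient.mk Ip (g.comp β) :=
    fun g => Ideal.Quotient.lift_mk _ _ _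
  set ψℓ : Polynomial (Polynomial k ⧸ I) →+* (Polynomial k ⧸ Ip) :=
    eval₂RingHom L (Ideal.Quotient.mk Ip X - Ideal.Quotient.mk Ip β) with hψℓdef
  have hψX : ψℓ X = Ideal.Quotient.mk Ip X - Ideal.Quotient.mk Ip β := eval₂_X _ _
  have hψC : ∀ z : Polynomial k ⧸ I, ψℓ (C z) = L z := fun z => eval₂_C _ _
  have hXβ : (Ideal.Quotient.mk Ip X - Ideal.Quotient.mk Ip β) ^ p = 0 := by
    rw [← map_sub, ← map_pow]
    refine Ideal.Quotient.eq_zero_iff_mem.mpr (Ideal.mem_span_singleton.mpr ?_)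
    have hdvd : S ∣ X - β := by
      have := (dvd_neg.mpr hβ1)
      rwa [neg_sub] at this
    exact pow_dvd_pow_of_dvd hdvd p
  have hψJ : ∀ g ∈ J, ψℓ g = 0 := by
    intro g hg
    obtain ⟨h, rfl⟩ := Ideal.mem_span_singleton.mp hg
    rw [map_mul, map_pow, hψX, hXβ, zero_mul]
  set ψ : (Polynomial (Polynomial k ⧸ I) ⧸ J) →+* (Polynomial k ⧸ Ip) :=
    Ideal.Quotient.lift J ψℓ hψJ with hψdef
  have hψ : ∀ g, ψ (Ideal.Quotient.mk J g) = ψℓ g := fun g => Ideal.Quotient.lift_mk _ _ _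
  -- ψ ∘ Φ = mk
  have C1 : ψ.comp Φ = Ideal.Quotient.mk Ip := by
    refine Polynomial.ringHom_ext (fun c => ?_) ?_
    · show ψ (Φ (C c)) = Ideal.Quotient.mk Ip (C c)
      rw [hΦ, F2C, hψ, hψC, F1, hL, C_comp]
    · show ψ (Φ X) = Ideal.Quotient.mk Ip X
      rw [hΦ, F2X, hψ, map_add, hψX, hψC, hadef, hL, X_comp]
      ring
  have hker : RingHom.ker Φ = Ip := by
    ext f
    constructor
    · intro hf
      have h1 : Ideal.Quotient.mk Ip f = 0 := by
        have := RingHom.congr_fun C1 f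
        rw [RingHom.coe_comp, Function.comp_apply, RingHom.mem_ker.mp hf, map_zero] at this
        exact this.symm
      exact Ideal.Quotient.eq_zero_iff_mem.mp h1
    · intro hf
      exact RingHom.mem_ker.mpr (hkerSp f hf)
  -- key uniqueness fact : Φ β = mk J (C a)
  set ρ : k →+* (Polynomial (Polynomial k ⧸ I) ⧸ J) := Φ.comp C with hρdef
  set σ : (Polynomial k ⧸ I) →+* (Polynomial (Polynomial k ⧸ I) ⧸ J) :=
    (Ideal.Quotient.mk J).comp (C : (Polynomial k ⧸ I) →+* Polynomial (Polynomial k ⧸ I))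
    with hσdef
  have hρσ : ρ = σ.comp (algebraMap k (Polynomial k ⧸ I)) := by
    refine RingHom.ext fun c => ?_
    show Φ (C c) = σ (algebraMap k (Polynomial k ⧸ I) c)
    rw [hΦ, F2C]
    rfl
  have hσa : Ideal.Quotient.mk J (C a) = σ a := rfl
  have hΦX' : Φ X = Ideal.Quotient.mk J X + Ideal.Quotient.mk J (C a) := by
    rw [hΦ, F2X, map_add]
  have hSβ0 : Φ (S.comp β) = 0 := by
    obtain ⟨w, hw⟩ := hβ2
    rw [hw, map_mul, hΦSp, zero_mul]
  have hFΦβ : eval₂ ρ (Φ β) S = 0 := by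
    rw [hρdef, ← hom_eval₂]
    exact hSβ0
  have hFA : eval₂ ρ (Ideal.Quotient.mk J (C a)) S = 0 := by
    rw [hσa, hρσ, ← hom_eval₂, hevalI, hmkIS, map_zero]
  have hU : IsUnit (eval₂ ρ (Ideal.Quotient.mk J (C a)) (derivative S)) := by
    have h1 : eval₂ ρ (Ideal.Quotient.mk J (C a)) (derivative S) =
        σ (Ideal.Quotient.mk I (derivative S)) := by
      rw [hσa, hρσ, ← hom_eval₂, hevalI]
    rw [h1]
    refine IsUnit.map σ ?_
    obtain ⟨u, v, huv⟩ := hS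
    refine IsUnit.of_mul_eq_one (Ideal.Quotient.mk I v) ?_
    have h2 := congrArg (Ideal.Quotient.mk I) huv
    rw [map_add, map_mul, map_mul, hmkIS, mul_zero, zero_add, map_one] at h2
    rw [mul_comm]
    exact h2
  obtain ⟨h, hh⟩ := hβ1
  have hβX : β = S * h + X := by linear_combination hh
  obtain ⟨q, hq⟩ := hφ₀S_dvd
  have hΦS' : Φ S = Ideal.Quotient.mk J X * Ideal.Quotient.mk J q := by
    rw [hΦ, hq, map_mul]
  have hy : Φ β - Ideal.Quotient.mk J (C a) =
      Ideal.Quotient.mk J X * (Ideal.Quotient.mk J q * Φ h + 1) := by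
    have e1 : Φ β = Φ S * Φ h + Φ X := by rw [hβX, map_add, map_mul]
    rw [e1, hΦS', hΦX']
    ring
  have hyp : (Φ β - Ideal.Quotient.mk J (C a)) ^ p = 0 := by
    rw [hy, mul_pow, ← map_pow, hmkJXp, zero_mul]
  obtain ⟨c, hc⟩ := (S.map ρ).binomExpansion (Ideal.Quotient.mk J (C a))
    (Φ β - Ideal.Quotient.mk J (C a))
  have hAy : Ideal.Quotient.mk J (C a) + (Φ β - Ideal.Quotient.mk J (C a)) = Φ β := by ring
  rw [hAy, eval_map, eval_map, derivative_map, eval_map, hFΦβ, hFA] at hc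
  -- hc : 0 = 0 + U * y + c * y ^ 2
  have hnil : IsNilpotent (c * (Φ β - Ideal.Quotient.mk J (C a))) :=
    ⟨p, by rw [mul_pow, hyp, mul_zero]⟩
  have hunit : IsUnit (eval₂ ρ (Ideal.Quotient.mk J (C a)) (derivative S) +
      c * (Φ β - Ideal.Quotient.mk J (C a))) :=
    hnil.isUnit_add_left_of_commute hU (Commute.all _ _)
  have hy0 : (eval₂ ρ (Ideal.Quotient.mk J (C a)) (derivative S) +
      c * (Φ β - Ideal.Quotient.mk J (C a))) * (Φ β - Ideal.Quotient.mk J (C a)) = 0 := by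
    linear_combination -hc
  have hA : Φ β = Ideal.Quotient.mk J (C a) := by
    have h0 : Φ β - Ideal.Quotient.mk J (C a) = 0 := by
      refine hunit.mul_left_cancel ?_
      rw [hy0, mul_zero]
    exact sub_eq_zero.mp h0
  -- general consequence
  have hgen : ∀ g : Polynomial k,
      Φ (g.comp β) = Ideal.Quotient.mk J (C (Ideal.Quotient.mk I g)) := by
    intro g
    have h1 : Φ (eval₂ C β g) = eval₂ (Φ.comp C) (Φ β) g := hom_eval₂ _ _ _ _
    show Φ (eval₂ C β g) = _
    rw [h1, ← hρdef, hA, hσa, hρσ, ← hom_eval₂, hevalI]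
    rfl
  -- Φb ∘ ψ = id
  have C2 : Φb.comp ψ = RingHom.id _ := by
    refine Ideal.Quotient.ringHom_ext ?_
    refine Polynomial.ringHom_ext (fun z => ?_) ?_
    · obtain ⟨g, rfl⟩ := Ideal.Quotient.mk_surjective z
      show Φb (ψ (Ideal.Quotient.mk J (C (Ideal.Quotient.mk I g)))) =
        Ideal.Quotient.mk J (C (Ideal.Quotient.mk I g))
      rw [hψ, hψC, hL, hΦb, hgen]
    · show Φb (ψ (Ideal.Quotient.mk J X)) = Ideal.Quotient.mk J X
      rw [hψ, hψX, map_sub, hΦb, hΦb, hΦX', hA]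
      ring
  have hΦbmk : Φb.comp (Ideal.Quotient.mk Ip) = Φ := RingHom.ext hΦb
  have C1' : ψ.comp Φb = RingHom.id _ := by
    refine Ideal.Quotient.ringHom_ext ?_
    rw [RingHom.comp_assoc, hΦbmk, C1, RingHom.id_comp]
  set e : (Polynomial k ⧸ Ip) ≃+* (Polynomial (Polynomial k ⧸ I) ⧸ J) :=
    RingEquiv.ofRingHom Φb ψ C2 C1' with hedef
  have he : ∀ f : Polynomial k, e (Ideal.Quotient.mk Ip f) = Φ f := fun f => hΦb f
  have hsurj : Function.Surjective Φ := by
    intro y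
    obtain ⟨g, hg⟩ := Ideal.Quotient.mk_surjective (ψ y)
    refine ⟨g, ?_⟩
    have h1 : Φ g = Φb (ψ y) := by rw [← hg, hΦb]
    rw [h1]
    exact RingHom.congr_fun C2 y
  have hder : ∀ f : Polynomial k,
      Φ (derivative f) = Ideal.Quotient.mk J (derivative (φ₀ f)) := by
    intro f
    have h1 : derivative (φ₀ f) = φ₀ (derivative f) := by
      rw [F3 f, derivative_comp, derivative_map, ← F3]
      have h2 : derivative (X + C a : Polynomial (Polynomial k ⧸ I)) = 1 := by
        rw [derivative_add, derivative_X, derivative_C, add_zero]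
      rw [h2, one_mul]
    rw [hΦ, h1]
  exact ⟨hsurj, hker, ⟨e, he⟩, hder⟩
end
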